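/- Given m finite message sets A_1,...,A_m with |A_i| = A_i and distances d_1 ≥ d_2 ≥ ... ≥ d_m ≥ 1, suppose W ⊆ F_2^n satisfies |W| > Σ_{i=1}^m (Π_{j>i} A_j)·(A_i − 1)·V(n, d_i − 1). Then there exists an injective map C : A_1 × ... × A_m → W such that for every i, whenever two message tuples differ in the i-th coordinate, their codewords have Hamming distance at least d_i. -/

import Mathlib

/-- Volume of a Hamming ball of radius `r` in `𝔽₂ⁿ`. -/
def V (n r : ℕ) : ℕ := (Finset.range (r + 1)).sum fun k => n.choose k

open Finset

lemma zmod2_eq_of_ne_iff {a b c : ZMod 2} (h : (a ≠ b) ↔ (a ≠ c)) : b = c := by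
  revert h; revert a b c; decide

lemma ball_card_le (n : ℕ) (x : Fin n → ZMod 2) (r : ℕ) :
    ((univ : Finset (Fin n → ZMod 2)).filter fun y => hammingDist x y ≤ r).card ≤ V n r := by
  classical
  have h := Finset.card_le_card_of_injOn
    (s := (univ : Finset (Fin n → ZMod 2)).filter fun y => hammingDist x y ≤ r)
    (t := (Finset.range (r+1)).biUnion fun k => (univ : Finset (Fin n)).powersetCard k)
    (fun y => (univ.filter fun i => x i ≠ y i)) ?_ ?_
  · refine h.trans <| (Finset.card_biUnion_le).trans ?_
    unfold V
    exact Finset.sum_le_sum fun k _ => by simp [Finset.card_powersetCard]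
  · intro y hy
    simp only [mem_coe, mem_filter] at hy
    simp only [mem_coe, mem_biUnion, mem_range, mem_powersetCard]
    exact ⟨hammingDist x y, Nat.lt_succ_of_le hy.2, subset_univ _, rfl⟩
  · intro y1 _ y2 _ he
    funext i
    have h2 : (x i ≠ y1 i) ↔ (x i ≠ y2 i) := by
      have := Finset.ext_iff.mp he i
      simpa using this
    exact zmod2_eq_of_ne_iff h2
/-- GV bound for multi-level UEP codes: if `W ⊆ 𝔽₂ⁿ` is larger than
`Σ_i (Π_{j>i} A_j)·(A_i − 1)·V(n, d_i − 1)`, there is a UEP code inside `W`. -/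
theorem uep_gv_bound (n m : ℕ) (A : Fin m → ℕ) (d : Fin m → ℕ)
    (hd1 : ∀ i, 1 ≤ d i) (hmono : ∀ i j : Fin m, i ≤ j → d j ≤ d i)
    (W : Finset (Fin n → ZMod 2))
    (hW : (Finset.univ.sum fun i : Fin m =>
        ((Finset.univ.filter fun j : Fin m => i < j).prod A) * (A i - 1) * V n (d i - 1))
      < W.card) :
    ∃ C : (∀ i : Fin m, Fin (A i)) → (Fin n → ZMod 2),
      Function.Injective C ∧
      (∀ a, C a ∈ W) ∧
      ∀ (a a' : ∀ i : Fin m, Fin (A i)) (i : Fin m),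
        a i ≠ a' i → d i ≤ hammingDist (C a) (C a') := by
  classical
  have main : ∀ s : Finset (∀ i : Fin m, Fin (A i)),
      ∃ c : (∀ i : Fin m, Fin (A i)) → (Fin n → ZMod 2),
        (∀ a ∈ s, c a ∈ W) ∧
        ∀ a₁ ∈ s, ∀ a₂ ∈ s, ∀ i : Fin m, a₁ i ≠ a₂ i →
          d i ≤ hammingDist (c a₁) (c a₂) := by
    intro s
    induction s using Finset.induction_on with
    | empty => exact ⟨fun _ _ => 0, by simp, by simp⟩
    | @insert a s ha ih =>
      obtain ⟨c, hcW, hcd⟩ := ih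
      -- the first index where `a'` differs from `a`, as a radius
      set Df : (∀ i : Fin m, Fin (A i)) → Finset (Fin m) :=
        fun a' => Finset.univ.filter fun i : Fin m => a i ≠ a' i with hDf
      have hDne : ∀ a' ∈ s, (Df a').Nonempty := by
        intro a' ha'
        rw [Finset.filter_nonempty_iff]
        have hne : a ≠ a' := fun h => ha (h ▸ ha')
        obtain ⟨i, hi⟩ := Function.ne_iff.mp hne
        exact ⟨i, Finset.mem_univ i, hi⟩
      set R : (∀ i : Fin m, Fin (A i)) → ℕ :=
        fun a' => if h : (Df a').Nonempty then d ((Df a').min' h) - 1 else 0 with hR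
      set Forb : Finset (Fin n → ZMod 2) :=
        s.biUnion (fun a' => W.filter fun y => hammingDist (c a') y ≤ R a') with hForb
      -- counting
      have hcount : Forb.card < W.card := by
        have h1 : Forb.card ≤ s.sum fun a' => V n (R a') := by
          refine Finset.card_biUnion_le.trans (Finset.sum_le_sum fun a' _ => ?_)
          exact (Finset.card_le_card (Finset.filter_subset_filter _ (Finset.subset_univ W))).trans
            (ball_card_le n (c a') (R a'))
        have h2 : (s.sum fun a' => V n (R a'))
            ≤ Finset.univ.sum fun i : Fin m =>
              ((Finset.univ.filter fun j : Fin m => i < j).prod A) * (A i - 1) * V n (d i - 1) := by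
          -- partition by first differing index
          set P : (∀ i : Fin m, Fin (A i)) → Fin m → Prop :=
            fun a' i => (∀ j, j < i → a' j = a j) ∧ a' i ≠ a i with hP
          have hsub : s ⊆ Finset.univ.biUnion
              (fun i : Fin m => Finset.univ.filter fun a' => P a' i) := by
            intro a' ha'
            have hne := hDne a' ha'
            set i0 := (Df a').min' hne with hi0
            have hi0mem : a i0 ≠ a' i0 :=
              (Finset.mem_filter.mp ((Df a').min'_mem hne)).2
            refine Finset.mem_biUnion.mpr ⟨i0, Finset.mem_univ _, Finset.mem_filter.mpr
              ⟨Finset.mem_univ _, ?_, fun h => hi0mem h.symm⟩⟩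
            intro j hj
            by_contra hj2
            have : i0 ≤ j := (Df a').min'_le j
              (Finset.mem_filter.mpr ⟨Finset.mem_univ _, fun h => hj2 h.symm⟩)
            exact absurd hj (not_lt.mpr this)
          have hdisj : (↑(Finset.univ : Finset (Fin m)) : Set (Fin m)).PairwiseDisjoint
              (fun i : Fin m => Finset.univ.filter fun a' => P a' i) := by
            intro i _ j _ hij
            refine Finset.disjoint_left.mpr fun a' h1 h2 => ?_
            rw [Finset.mem_filter] at h1 h2
            rcases lt_or_gt_of_ne hij with h | h
            · exact h1.2.2 (h2.2.1 _ h)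
            · exact h2.2.2 (h1.2.1 _ h)
          have hRval : ∀ (i : Fin m), ∀ a' ∈ Finset.univ.filter fun a' => P a' i,
              a' ∈ s → R a' = d i - 1 := by
            intro i a' h' hs'
            rw [Finset.mem_filter] at h'
            have hne := hDne a' hs'
            have himem : i ∈ Df a' :=
              Finset.mem_filter.mpr ⟨Finset.mem_univ _, fun h => h'.2.2 h.symm⟩
            have hle : (Df a').min' hne ≤ i := (Df a').min'_le i himem
            have hge : i ≤ (Df a').min' hne := by
              by_contra hlt
              have hmem : a ((Df a').min' hne) ≠ a' ((Df a').min' hne) :=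
                (Finset.mem_filter.mp ((Df a').min'_mem hne)).2
              exact hmem (h'.2.1 _ (not_le.mp hlt)).symm
            show (if h : (Df a').Nonempty then d ((Df a').min' h) - 1 else 0) = d i - 1
            rw [dif_pos hne, le_antisymm hle hge]
          calc (s.sum fun a' => V n (R a'))
              ≤ Finset.univ.sum fun i : Fin m =>
                  ((Finset.univ.filter fun a' => P a' i) ∩ s).sum
                    (fun a' => V n (R a')) := by
                rw [← Finset.sum_biUnion]
                · refine Finset.sum_le_sum_of_subset fun a' ha' => ?_
                  obtain ⟨i, _, hi⟩ := Finset.mem_biUnion.mp (hsub ha')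
                  exact Finset.mem_biUnion.mpr ⟨i, Finset.mem_univ _,
                    Finset.mem_inter.mpr ⟨hi, ha'⟩⟩
                · exact fun i hi j hj hij =>
                    (hdisj hi hj hij).mono (Finset.inter_subset_left) (Finset.inter_subset_left)
            _ ≤ Finset.univ.sum fun i : Fin m =>
                  ((Finset.univ.filter fun j : Fin m => i < j).prod A) * (A i - 1)
                    * V n (d i - 1) := by
                refine Finset.sum_le_sum fun i _ => ?_
                have heq : ((Finset.univ.filter fun a' => P a' i) ∩ s).sum
                    (fun a' => V n (R a'))
                    = ((Finset.univ.filter fun a' => P a' i) ∩ s).card * V n (d i - 1) := by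
                  have hcg : ∀ a' ∈ (Finset.univ.filter fun a' => P a' i) ∩ s,
                      V n (R a') = V n (d i - 1) := by
                    intro a' ha'
                    rw [Finset.mem_inter] at ha'
                    rw [hRval i a' ha'.1 ha'.2]
                  rw [Finset.sum_congr rfl hcg, Finset.sum_const, smul_eq_mul]
                have hcard : ((Finset.univ.filter fun a' => P a' i) ∩ s).card
                    ≤ (A i - 1) * ((Finset.univ.filter fun j : Fin m => i < j).prod A) := by
                  have hinj := Finset.card_le_card_of_injOn
                    (s := (Finset.univ.filter fun a' => P a' i) ∩ s)
                    (t := (Finset.univ.erase (a i)) ×ˢ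
                      (Finset.univ : Finset (∀ j : {j : Fin m // i < j}, Fin (A j.1))))
                    (fun a' => (a' i, fun j => a' j.1)) ?_ ?_
                  · refine hinj.trans ?_
                    rw [Finset.card_product, Finset.card_erase_of_mem (Finset.mem_univ _),
                      Finset.card_univ, Finset.card_univ, Fintype.card_fin]
                    refine Nat.mul_le_mul_left _ ?_
                    rw [Fintype.card_pi]
                    have hps : ∏ j ∈ Finset.univ.filter (fun j : Fin m => i < j), A j
                        = ∏ j : {j : Fin m // i < j}, A j.1 :=
                      Finset.prod_subtype _ (fun x => by simp) A
                    simp [hps]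
                  · intro a' ha'
                    rw [Finset.mem_coe, Finset.mem_inter, Finset.mem_filter] at ha'
                    exact Finset.mem_product.mpr
                      ⟨Finset.mem_erase.mpr ⟨ha'.1.2.2, Finset.mem_univ _⟩, Finset.mem_univ _⟩
                  · intro a1 h1 a2 h2 he
                    rw [Finset.mem_coe, Finset.mem_inter, Finset.mem_filter] at h1 h2
                    funext j
                    rcases lt_trichotomy j i with h | h | h
                    · rw [h1.1.2.1 _ h, h2.1.2.1 _ h]
                    · subst h; exact (Prod.ext_iff.mp he).1
                    · exact congrFun (Prod.ext_iff.mp he).2 ⟨j, h⟩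
                calc ((Finset.univ.filter fun a' => P a' i) ∩ s).sum (fun a' => V n (R a'))
                    = ((Finset.univ.filter fun a' => P a' i) ∩ s).card * V n (d i - 1) := heq
                  _ ≤ ((A i - 1) * ((Finset.univ.filter fun j : Fin m => i < j).prod A))
                      * V n (d i - 1) := Nat.mul_le_mul_right _ hcard
                  _ = _ := by ring
        exact lt_of_le_of_lt (h1.trans h2) hW
      -- pick a new codeword
      have hns : ¬ W ⊆ Forb := fun h => absurd (Finset.card_le_card h) (not_le.mpr hcount)
      obtain ⟨x, hxW, hxF⟩ := Finset.not_subset.mp hns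
      have key : ∀ a' ∈ s, ∀ i : Fin m, a i ≠ a' i → d i ≤ hammingDist x (c a') := by
        intro a' hs' i hi
        have hnb : ¬ (hammingDist (c a') x ≤ R a') := by
          intro h
          exact hxF (Finset.mem_biUnion.mpr ⟨a', hs', Finset.mem_filter.mpr ⟨hxW, h⟩⟩)
        have hne := hDne a' hs'
        set i0 := (Df a').min' hne with hi0
        have hRv : R a' = d i0 - 1 := by
          show (if h : (Df a').Nonempty then d ((Df a').min' h) - 1 else 0) = d i0 - 1
          rw [dif_pos hne]
        have hlt : d i0 - 1 < hammingDist (c a') x := not_le.mp (hRv ▸ hnb)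
        have hd : 1 ≤ d i0 := hd1 i0
        have h1 : d i0 ≤ hammingDist (c a') x := by omega
        have h2 : i0 ≤ i := (Df a').min'_le i
          (Finset.mem_filter.mpr ⟨Finset.mem_univ _, hi⟩)
        rw [hammingDist_comm x (c a')]
        exact le_trans (hmono i0 i h2) h1
      refine ⟨Function.update c a x, ?_, ?_⟩
      · intro a₁ h₁
        rcases Finset.mem_insert.mp h₁ with h | h
        · rw [h, Function.update_self]; exact hxW
        · rw [Function.update_of_ne (ne_of_mem_of_not_mem h ha)]; exact hcW a₁ h
      · intro a₁ h₁ a₂ h₂ i hi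
        rcases Finset.mem_insert.mp h₁ with h1 | h1 <;>
          rcases Finset.mem_insert.mp h₂ with h2 | h2
        · exact absurd (h1 ▸ h2 ▸ rfl : a₁ i = a₂ i) hi
        · subst h1
          rw [Function.update_self, Function.update_of_ne (ne_of_mem_of_not_mem h2 ha)]
          exact key a₂ h2 i hi
        · subst h2
          rw [Function.update_self, Function.update_of_ne (ne_of_mem_of_not_mem h1 ha),
            hammingDist_comm]
          exact key a₁ h1 i (Ne.symm hi)
        · rw [Function.update_of_ne (ne_of_mem_of_not_mem h1 ha),
            Function.update_of_ne (ne_of_mem_of_not_mem h2 ha)]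
          exact hcd a₁ h1 a₂ h2 i hi
  obtain ⟨c, hcW, hcd⟩ := main Finset.univ
  refine ⟨c, ?_, fun a => hcW a (Finset.mem_univ a), fun a a' i hi =>
    hcd a (Finset.mem_univ a) a' (Finset.mem_univ a') i hi⟩
  intro a a' he
  by_contra hne
  obtain ⟨i, hi⟩ := Function.ne_iff.mp hne
  have := hcd a (Finset.mem_univ a) a' (Finset.mem_univ a') i hi
  rw [he, hammingDist_self] at this
  exact absurd this (Nat.not_le.mpr (hd1 i))
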